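/- arXiv:0904.1781 — 2 statements merged into one kernel-verified Lean document; each statement's English description precedes it below -/
import Mathlib

section
/- Let q ∈ ℝ, let α, β, γ ≥ 0, and set F(u,η) = |u|^α |η|^β (2π − |η|)^γ e^{−¼(|u||η|)²}. Then for every C₀ > 0 there is a constant C (depending only on q, α, β, γ, C₀, n, m) with the following property: whenever u ∈ ℝ^{2n}, η ∈ ℝ^m, and 1 ≤ τ₀ ≤ τ₁ ≤ τ₂ ≤ 2π/|η| satisfy |u||η| ≥ 1 and p_1(Φ(u, tη)) A(u, tη) ≤ C₀ F(u, tη) for all t ∈ [τ₁, τ₂], then ∫_{τ₁}^{τ₂} p_1(Φ(u, tη)) A(u, tη) t^q dt ≤ C τ₀^{q−1} (|u||η|)^{−2} F(u, τ₀η). -/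
open scoped RealInnerProductSpace
open MeasureTheory

noncomputable section

/-- The underlying space of an H-type group: `ℝ^{2n} × ℝ^m`. -/
abbrev Gp (n m : ℕ) : Type :=
  EuclideanSpace ℝ (Fin (2 * n)) × EuclideanSpace ℝ (Fin m)

/-- The data of an H-type group structure on `ℝ^{2n} × ℝ^m`: a skew-symmetric bilinear
bracket whose image spans `ℝ^m`, together with the maps `J_z` determined by
`⟪J_z x, y⟫ = ⟪z, [x,y]⟫`, which are orthogonal for `|z| = 1`. -/
structure HTypeData (n m : ℕ) : Type where
  bracket : EuclideanSpace ℝ (Fin (2 * n)) →ₗ[ℝ]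
    EuclideanSpace ℝ (Fin (2 * n)) →ₗ[ℝ] EuclideanSpace ℝ (Fin m)
  skew : ∀ x y, bracket x y = - bracket y x
  spans : Submodule.span ℝ {z | ∃ x y, bracket x y = z} = ⊤
  J : EuclideanSpace ℝ (Fin m) →ₗ[ℝ]
    EuclideanSpace ℝ (Fin (2 * n)) →ₗ[ℝ] EuclideanSpace ℝ (Fin (2 * n))
  J_def : ∀ z x y, ⟪J z x, y⟫ = ⟪z, bracket x y⟫
  J_orth : ∀ z, ‖z‖ = 1 → ∀ x, ‖J z x‖ = ‖x‖

namespace HTypeData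

variable {n m : ℕ}

/-- The group operation `g ⋆ h = g + h + ½[g,h]`. -/
def mul (H : HTypeData n m) (g h : Gp n m) : Gp n m :=
  (g.1 + h.1, g.2 + h.2 + (1 / 2 : ℝ) • H.bracket g.1 h.1)

/-- The left-invariant vector field `X_i` applied to `f`; note that
`Σ_j ⟪J_{u_j} x, e_i⟫ u_j = [x, e_i]`. -/
def X (H : HTypeData n m) (i : Fin (2 * n)) (f : Gp n m → ℝ) (g : Gp n m) : ℝ :=
  fderiv ℝ f g
    (EuclideanSpace.single i 1, (1 / 2 : ℝ) • H.bracket g.1 (EuclideanSpace.single i 1))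

/-- The right-invariant vector field `X̂_i` applied to `f`. -/
def Xhat (H : HTypeData n m) (i : Fin (2 * n)) (f : Gp n m → ℝ) (g : Gp n m) : ℝ :=
  fderiv ℝ f g
    (EuclideanSpace.single i 1, (-(1 / 2) : ℝ) • H.bracket g.1 (EuclideanSpace.single i 1))

/-- The left-invariant horizontal (sub)gradient `∇f = (X_1 f, …, X_{2n} f)`. -/
def grad (H : HTypeData n m) (f : Gp n m → ℝ) (g : Gp n m) :
    EuclideanSpace ℝ (Fin (2 * n)) :=
  WithLp.toLp 2 (fun i => H.X i f g)

/-- The right-invariant horizontal (sub)gradient `∇̂f = (X̂_1 f, …, X̂_{2n} f)`. -/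
def gradHat (H : HTypeData n m) (f : Gp n m → ℝ) (g : Gp n m) :
    EuclideanSpace ℝ (Fin (2 * n)) :=
  WithLp.toLp 2 (fun i => H.Xhat i f g)

end HTypeData

/-- The Euclidean gradient in the `z`-variables. -/
def gradZ {n m : ℕ} (f : Gp n m → ℝ) (g : Gp n m) : EuclideanSpace ℝ (Fin m) :=
  WithLp.toLp 2 (fun j => fderiv ℝ f g (0, EuclideanSpace.single j 1))

/-- The heat kernel
`p_t(x,z) = (2π)^{-m} (4π)^{-n} ∫_{ℝ^m} e^{i⟨λ,z⟩ - ¼|λ| coth(t|λ|) |x|²} (|λ|/sinh(t|λ|))^n dλ`. -/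
def heatKernel (n m : ℕ) (t : ℝ) (g : Gp n m) : ℝ :=
  ((2 * Real.pi) ^ m)⁻¹ * ((4 * Real.pi) ^ n)⁻¹ *
    ∫ lam : EuclideanSpace ℝ (Fin m),
      (Complex.exp (Complex.I * (⟪lam, g.2⟫ : ℂ) -
          ((1 / 4 * ‖lam‖ * (Real.cosh (t * ‖lam‖) / Real.sinh (t * ‖lam‖)) * ‖g.1‖ ^ 2 : ℝ) : ℂ)) *
        (((‖lam‖ / Real.sinh (t * ‖lam‖)) ^ n : ℝ) : ℂ)).re

namespace HTypeData

variable {n m : ℕ}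

/-- The heat semigroup `P_t f(g) = ∫_G f(g ⋆ k) p_t(k) dm(k)` (with `P_0` the identity). -/
def Pt (H : HTypeData n m) (t : ℝ) (f : Gp n m → ℝ) (g : Gp n m) : ℝ :=
  if t = 0 then f g else ∫ k : Gp n m, f (H.mul g k) * heatKernel n m t k

/-- `L` is the length of some horizontal path from `g` to `h`:
`γ̇(t) = Σ_i a_i(t) X_i(γ(t)) = (a(t), ½[γ(t)_x, a(t)])` and `L = ∫_0^1 ‖a(t)‖ dt`. -/
def IsHorizLength (H : HTypeData n m) (g h : Gp n m) (L : ℝ) : Prop :=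
  ∃ (γ : ℝ → Gp n m) (a : ℝ → EuclideanSpace ℝ (Fin (2 * n))),
    γ 0 = g ∧ γ 1 = h ∧
    (∀ t ∈ Set.Icc (0 : ℝ) 1,
      HasDerivWithinAt γ ((a t, (1 / 2 : ℝ) • H.bracket (γ t).1 (a t)) : Gp n m)
        (Set.Icc (0 : ℝ) 1) t) ∧
    IntervalIntegrable (fun t => ‖a t‖) volume 0 1 ∧
    L = ∫ t in (0 : ℝ)..1, ‖a t‖

/-- The Carnot–Carathéodory distance. -/
def ccDist (H : HTypeData n m) (g h : Gp n m) : ℝ :=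
  sInf {L | H.IsHorizLength g h L}

/-- The class `𝒞` of `C¹` functions with
`|f(g)| + |∇f(g)| + |∇̂f(g)| ≤ M e^{a d(0,g)^{2-ε}}`. -/
def ClassC (H : HTypeData n m) (f : Gp n m → ℝ) : Prop :=
  ContDiff ℝ 1 f ∧
  ∃ M a ε : ℝ, 0 ≤ M ∧ 0 ≤ a ∧ 0 < ε ∧ ε < 1 ∧
    ∀ g : Gp n m, |f g| + ‖H.grad f g‖ + ‖H.gradHat f g‖ ≤
      M * Real.exp (a * H.ccDist 0 g ^ ((2 : ℝ) - ε))

/-- The Carnot–Carathéodory unit ball `B`. -/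
def ccBall (H : HTypeData n m) : Set (Gp n m) := {g | H.ccDist 0 g ≤ 1}

/-- The average `m_f` of `f` over the unit ball `B`. -/
def mAvg (H : HTypeData n m) (f : Gp n m → ℝ) : ℝ :=
  (∫ g in H.ccBall, f g) / (volume H.ccBall).toReal

/-- The geodesic coordinates map `Φ`. -/
def Phi (H : HTypeData n m) (u : EuclideanSpace ℝ (Fin (2 * n)))
    (η : EuclideanSpace ℝ (Fin m)) : Gp n m :=
  ((1 - Real.cos ‖η‖) • u + (Real.sin ‖η‖ / ‖η‖) • H.J η u,
    (‖u‖ ^ 2 / 2 * (1 - Real.sin ‖η‖ / ‖η‖)) • η)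

end HTypeData

/-- The Jacobian determinant `A(u,η)` of `Φ`. -/
def Afun (n m : ℕ) (u : EuclideanSpace ℝ (Fin (2 * n)))
    (η : EuclideanSpace ℝ (Fin m)) : ℝ :=
  ‖u‖ ^ (2 * m) * (1 / 2 - Real.sin ‖η‖ / (2 * ‖η‖)) ^ (m - 1) *
    (2 - 2 * Real.cos ‖η‖) ^ (n - 1) *
    (2 - 2 * Real.cos ‖η‖ - ‖η‖ * Real.sin ‖η‖)

end


set_option maxHeartbeats 1000000 in
/-- Estimate of the integral of `p₁ A t^q` along a portion of a geodesic lying in a single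
region where `p₁ A ≲ F`, with `F(u,η) = |u|^α |η|^β (2π-|η|)^γ e^{-¼(|u||η|)²}`. -/
theorem single_region_estimate (n m : ℕ) (hn : 1 ≤ n) (hm : 1 ≤ m) (H : HTypeData n m)
    (q α β γ : ℝ) (hα : 0 ≤ α) (hβ : 0 ≤ β) (hγ : 0 ≤ γ) (C₀ : ℝ) (hC₀ : 0 < C₀) :
    ∃ C : ℝ, ∀ (u : EuclideanSpace ℝ (Fin (2 * n))) (η : EuclideanSpace ℝ (Fin m))
      (τ₀ τ₁ τ₂ : ℝ), 1 ≤ τ₀ → τ₀ ≤ τ₁ → τ₁ ≤ τ₂ → τ₂ ≤ 2 * Real.pi / ‖η‖ →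
      1 ≤ ‖u‖ * ‖η‖ →
      (∀ t ∈ Set.Icc τ₁ τ₂,
        heatKernel n m 1 (H.Phi u (t • η)) * Afun n m u (t • η) ≤
          C₀ * (‖u‖ ^ α * ‖t • η‖ ^ β * (2 * Real.pi - ‖t • η‖) ^ γ *
            Real.exp (-(1 / 4) * (‖u‖ * ‖t • η‖) ^ 2))) →
      (∫ t in τ₁..τ₂, heatKernel n m 1 (H.Phi u (t • η)) * Afun n m u (t • η) * t ^ q) ≤
        C * τ₀ ^ (q - 1) / (‖u‖ * ‖η‖) ^ 2 *
          (‖u‖ ^ α * ‖τ₀ • η‖ ^ β * (2 * Real.pi - ‖τ₀ • η‖) ^ γ *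
            Real.exp (-(1 / 4) * (‖u‖ * ‖τ₀ • η‖) ^ 2)) := by
  
  set κ := |β + q| with hκdef
  refine ⟨4 * C₀ * Real.exp (κ ^ 2), ?_⟩
  intro u η τ₀ τ₁ τ₂ h1 h01 h12 h2π hr hbound
  have hηpos : 0 < ‖η‖ := by
    rcases lt_or_eq_of_le (norm_nonneg η) with h | h
    · exact h
    · exfalso; rw [← h, mul_zero] at hr; linarith
  set r : ℝ := ‖u‖ * ‖η‖ with hrdef
  have hrpos : (0:ℝ) < r := lt_of_lt_of_le one_pos hr
  have hτ₀pos : (0:ℝ) < τ₀ := lt_of_lt_of_le one_pos h1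
  have hτ₀η : τ₀ * ‖η‖ ≤ 2 * Real.pi := by
    have h := le_trans (le_trans h01 h12) h2π
    exact (le_div_iff₀ hηpos).1 h
  have hκ0 : 0 ≤ κ := abs_nonneg _
  set c : ℝ := 1 / 4 * r ^ 2 * τ₀ with hcdef
  have hcpos : 0 < c := by positivity
  have hnorm : ∀ s : ℝ, 0 ≤ s → ‖s • η‖ = s * ‖η‖ := fun s hs => by
    rw [norm_smul, Real.norm_eq_abs, abs_of_nonneg hs]
  rw [hnorm τ₀ hτ₀pos.le]
  set F₀ : ℝ := ‖u‖ ^ α * (τ₀ * ‖η‖) ^ β * (2 * Real.pi - τ₀ * ‖η‖) ^ γ *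
      Real.exp (-(1 / 4) * (‖u‖ * (τ₀ * ‖η‖)) ^ 2) with hF₀def
  have h2πτ₀ : 0 ≤ 2 * Real.pi - τ₀ * ‖η‖ := by linarith
  have hF₀nonneg : 0 ≤ F₀ := by
    rw [hF₀def]
    have h1' : (0:ℝ) ≤ ‖u‖ ^ α := Real.rpow_nonneg (norm_nonneg _) _
    have h2' : (0:ℝ) ≤ (τ₀ * ‖η‖) ^ β := Real.rpow_nonneg (by positivity) _
    have h3' : (0:ℝ) ≤ (2 * Real.pi - τ₀ * ‖η‖) ^ γ := Real.rpow_nonneg h2πτ₀ _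
    positivity
  set D : ℝ := C₀ * Real.exp (κ ^ 2) * τ₀ ^ q * F₀ with hDdef
  have hτq : (0:ℝ) ≤ τ₀ ^ q := Real.rpow_nonneg hτ₀pos.le q
  have hDnonneg : 0 ≤ D := by positivity
  -- the pointwise bound
  have hpt : ∀ t ∈ Set.Icc τ₁ τ₂,
      heatKernel n m 1 (H.Phi u (t • η)) * Afun n m u (t • η) * t ^ q ≤
        D * Real.exp (-c * (t - τ₀)) := by
    intro t ht
    have htτ₀ : τ₀ ≤ t := le_trans h01 ht.1
    have ht0 : (0:ℝ) < t := lt_of_lt_of_le hτ₀pos htτ₀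
    have htη : t * ‖η‖ ≤ 2 * Real.pi := (le_div_iff₀ hηpos).1 (le_trans ht.2 h2π)
    have hb := hbound t ht
    rw [hnorm t ht0.le] at hb
    have htq : (0:ℝ) ≤ t ^ q := Real.rpow_nonneg ht0.le q
    have step1 : heatKernel n m 1 (H.Phi u (t • η)) * Afun n m u (t • η) * t ^ q ≤
        C₀ * (‖u‖ ^ α * (t * ‖η‖) ^ β * (2 * Real.pi - t * ‖η‖) ^ γ *
          Real.exp (-(1 / 4) * (‖u‖ * (t * ‖η‖)) ^ 2)) * t ^ q :=
      mul_le_mul_of_nonneg_right hb htq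
    refine step1.trans ?_
    have hA : ‖u‖ * (t * ‖η‖) = r * t := by rw [hrdef]; ring
    have hB : ‖u‖ * (τ₀ * ‖η‖) = r * τ₀ := by rw [hrdef]; ring
    have hL0 : 0 ≤ Real.log t - Real.log τ₀ :=
      sub_nonneg.2 (Real.log_le_log hτ₀pos htτ₀)
    have hLx : Real.log t - Real.log τ₀ ≤ t - τ₀ := by
      have h' := Real.log_le_sub_one_of_pos (div_pos ht0 hτ₀pos)
      rw [Real.log_div ht0.ne' hτ₀pos.ne'] at h'
      have h'' : t / τ₀ - 1 = (t - τ₀) / τ₀ := by field_simp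
      rw [h''] at h'
      have h3 := div_le_self (by linarith : (0:ℝ) ≤ t - τ₀) h1
      linarith
    have Kmain : (t * ‖η‖) ^ β * Real.exp (-(1 / 4) * (r * t) ^ 2) * t ^ q ≤
        Real.exp (κ ^ 2) * τ₀ ^ q * (τ₀ * ‖η‖) ^ β *
          Real.exp (-(1 / 4) * (r * τ₀) ^ 2) * Real.exp (-c * (t - τ₀)) := by
      rw [Real.rpow_def_of_pos (by positivity : (0:ℝ) < t * ‖η‖),
        Real.rpow_def_of_pos (by positivity : (0:ℝ) < τ₀ * ‖η‖),
        Real.rpow_def_of_pos ht0, Real.rpow_def_of_pos hτ₀pos,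
        Real.log_mul ht0.ne' hηpos.ne', Real.log_mul hτ₀pos.ne' hηpos.ne']
      rw [← Real.exp_add, ← Real.exp_add, ← Real.exp_add, ← Real.exp_add,
        ← Real.exp_add, ← Real.exp_add]
      refine Real.exp_le_exp.2 ?_
      have hκ1 : β + q ≤ κ := le_abs_self _
      have hr2 : (1:ℝ) ≤ r ^ 2 := by nlinarith
      nlinarith [mul_nonneg (sub_nonneg.2 hκ1) hL0,
        mul_nonneg hκ0 (sub_nonneg.2 hLx),
        sq_nonneg (t - τ₀ - 2 * κ),
        mul_nonneg (mul_nonneg (sub_nonneg.2 hr2) (by linarith : (0:ℝ) ≤ t - τ₀))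
          (by linarith : (0:ℝ) ≤ t - τ₀),
        mul_nonneg (mul_nonneg (sq_nonneg r) hτ₀pos.le)
          (by linarith : (0:ℝ) ≤ t - τ₀)]
    have K2 : (2 * Real.pi - t * ‖η‖) ^ γ ≤ (2 * Real.pi - τ₀ * ‖η‖) ^ γ := by
      refine Real.rpow_le_rpow (by linarith) ?_ hγ
      have : τ₀ * ‖η‖ ≤ t * ‖η‖ := by
        exact mul_le_mul_of_nonneg_right htτ₀ hηpos.le
      linarith
    have h2πt : 0 ≤ 2 * Real.pi - t * ‖η‖ := by linarith
    have hRmain : 0 ≤ Real.exp (κ ^ 2) * τ₀ ^ q * (τ₀ * ‖η‖) ^ β *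
        Real.exp (-(1 / 4) * (r * τ₀) ^ 2) * Real.exp (-c * (t - τ₀)) := by
      have h2' : (0:ℝ) ≤ (τ₀ * ‖η‖) ^ β := Real.rpow_nonneg (by positivity) _
      positivity
    have key : (t * ‖η‖) ^ β * (2 * Real.pi - t * ‖η‖) ^ γ *
          Real.exp (-(1 / 4) * (r * t) ^ 2) * t ^ q ≤
        Real.exp (κ ^ 2) * τ₀ ^ q * ((τ₀ * ‖η‖) ^ β * (2 * Real.pi - τ₀ * ‖η‖) ^ γ *
          Real.exp (-(1 / 4) * (r * τ₀) ^ 2)) * Real.exp (-c * (t - τ₀)) := by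
      calc (t * ‖η‖) ^ β * (2 * Real.pi - t * ‖η‖) ^ γ *
            Real.exp (-(1 / 4) * (r * t) ^ 2) * t ^ q
          = ((t * ‖η‖) ^ β * Real.exp (-(1 / 4) * (r * t) ^ 2) * t ^ q) *
            (2 * Real.pi - t * ‖η‖) ^ γ := by ring
        _ ≤ (Real.exp (κ ^ 2) * τ₀ ^ q * (τ₀ * ‖η‖) ^ β *
              Real.exp (-(1 / 4) * (r * τ₀) ^ 2) * Real.exp (-c * (t - τ₀))) *
            (2 * Real.pi - τ₀ * ‖η‖) ^ γ :=
            mul_le_mul Kmain K2 (Real.rpow_nonneg h2πt _) hRmain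
        _ = _ := by ring
    calc C₀ * (‖u‖ ^ α * (t * ‖η‖) ^ β * (2 * Real.pi - t * ‖η‖) ^ γ *
          Real.exp (-(1 / 4) * (‖u‖ * (t * ‖η‖)) ^ 2)) * t ^ q
        = C₀ * ‖u‖ ^ α * ((t * ‖η‖) ^ β * (2 * Real.pi - t * ‖η‖) ^ γ *
            Real.exp (-(1 / 4) * (r * t) ^ 2) * t ^ q) := by rw [hA]; ring
      _ ≤ C₀ * ‖u‖ ^ α * (Real.exp (κ ^ 2) * τ₀ ^ q *
            ((τ₀ * ‖η‖) ^ β * (2 * Real.pi - τ₀ * ‖η‖) ^ γ *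
              Real.exp (-(1 / 4) * (r * τ₀) ^ 2)) * Real.exp (-c * (t - τ₀))) := by
          refine mul_le_mul_of_nonneg_left key ?_
          have := Real.rpow_nonneg (norm_nonneg u) α
          positivity
      _ = D * Real.exp (-c * (t - τ₀)) := by rw [hDdef, hF₀def, hB]; ring
  by_cases hint : IntervalIntegrable
      (fun t => heatKernel n m 1 (H.Phi u (t • η)) * Afun n m u (t • η) * t ^ q)
      volume τ₁ τ₂
  · have hgcont : Continuous (fun t : ℝ => D * Real.exp (-c * (t - τ₀))) := by
      fun_prop
    have hgint : IntervalIntegrable (fun t : ℝ => D * Real.exp (-c * (t - τ₀)))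
        volume τ₁ τ₂ := hgcont.intervalIntegrable τ₁ τ₂
    have hmono := intervalIntegral.integral_mono_on h12 hint hgint hpt
    have hftc : (∫ t in τ₁..τ₂, Real.exp (-c * (t - τ₀))) =
        (-c⁻¹ * Real.exp (-c * (τ₂ - τ₀))) - (-c⁻¹ * Real.exp (-c * (τ₁ - τ₀))) := by
      refine intervalIntegral.integral_eq_sub_of_hasDerivAt
        (f := fun t : ℝ => -c⁻¹ * Real.exp (-c * (t - τ₀))) (fun s _ => ?_) ?_
      · have h1' : HasDerivAt (fun t : ℝ => -c * (t - τ₀)) (-c) s := by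
          simpa using ((hasDerivAt_id s).sub_const τ₀).const_mul (-c)
        have h2' := (h1'.exp).const_mul (-c⁻¹)
        convert h2' using 1
        · rfl
        field_simp [hcpos.ne']
      · exact (Real.continuous_exp.comp (by fun_prop)).intervalIntegrable τ₁ τ₂
    have hIle : (-c⁻¹ * Real.exp (-c * (τ₂ - τ₀))) -
        (-c⁻¹ * Real.exp (-c * (τ₁ - τ₀))) ≤ c⁻¹ := by
      have h1' : Real.exp (-c * (τ₁ - τ₀)) ≤ 1 := by
        refine Real.exp_le_one_iff.2 ?_
        have : 0 ≤ τ₁ - τ₀ := by linarith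
        nlinarith
      have h2' : 0 < Real.exp (-c * (τ₂ - τ₀)) := Real.exp_pos _
      have hci : 0 < c⁻¹ := inv_pos.2 hcpos
      nlinarith
    have hfin : D * c⁻¹ = 4 * C₀ * Real.exp (κ ^ 2) * τ₀ ^ (q - 1) / r ^ 2 * F₀ := by
      have hτ : τ₀ ^ (q - 1) = τ₀ ^ q / τ₀ := by
        rw [Real.rpow_sub hτ₀pos, Real.rpow_one]
      rw [hDdef, hcdef, hτ]
      field_simp
    calc (∫ t in τ₁..τ₂,
          heatKernel n m 1 (H.Phi u (t • η)) * Afun n m u (t • η) * t ^ q)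
        ≤ ∫ t in τ₁..τ₂, D * Real.exp (-c * (t - τ₀)) := hmono
      _ = D * ((-c⁻¹ * Real.exp (-c * (τ₂ - τ₀))) -
            (-c⁻¹ * Real.exp (-c * (τ₁ - τ₀)))) := by
          rw [intervalIntegral.integral_const_mul, hftc]
      _ ≤ D * c⁻¹ := mul_le_mul_of_nonneg_left hIle hDnonneg
      _ = 4 * C₀ * Real.exp (κ ^ 2) * τ₀ ^ (q - 1) / r ^ 2 * F₀ := hfin
  · rw [intervalIntegral.integral_undef hint]
    have hτq1 : (0:ℝ) ≤ τ₀ ^ (q - 1) := Real.rpow_nonneg hτ₀pos.le _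
    have : (0:ℝ) ≤ 4 * C₀ * Real.exp (κ ^ 2) * τ₀ ^ (q - 1) / r ^ 2 := by positivity
    exact mul_nonneg this hF₀nonneg
end

section
/- For x ∈ ℝ^{2n} with x ≠ 0, let T(x) = |x|^{−2} Σ_{j=1}^m (J_{u_j} x)(J_{u_j} x)^T ∈ M_{2n×2n}. Then: (i) T(x) is the orthogonal projection of ℝ^{2n} onto the m-dimensional subspace spanned by the mutually orthogonal vectors J_{u_1} x, …, J_{u_m} x, so T(x) x = 0, T(x) J_z x = J_z x for every z ∈ ℝ^m, and the operator norm of T(x) is 1; (ii) the divergence ∇·T(x), whose k-th component is Σ_{ℓ=1}^{2n} X_ℓ a_{kℓ}(x) where a_{kℓ} are the entries of T, satisfies |∇·T(x)| ≤ 3m(2n)²/|x|; (iii) if f is a C¹ radial function on G (i.e. f(x,z) depends only on |x| and |z|), then T(x) ∇f(x,z) = ½(∇ − ∇̂)f(x,z) = ½ J_{∇_z f(x,z)} x for all x ≠ 0, z ≠ 0. -/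
open scoped RealInnerProductSpace
open MeasureTheory

noncomputable section

/-- The matrix `T(x) = |x|⁻² Σ_j (J_{u_j} x)(J_{u_j} x)^T`. -/
def Tmat {n m : ℕ} (H : HTypeData n m) (x : EuclideanSpace ℝ (Fin (2 * n))) :
    Matrix (Fin (2 * n)) (Fin (2 * n)) ℝ :=
  fun k l => (‖x‖ ^ 2)⁻¹ *
    ∑ j : Fin m,
      H.J (EuclideanSpace.single j 1) x k * H.J (EuclideanSpace.single j 1) x l

/-- A matrix applied to a Euclidean vector. -/
def matApply {k : ℕ} (M : Matrix (Fin k) (Fin k) ℝ) (v : EuclideanSpace ℝ (Fin k)) :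
    EuclideanSpace ℝ (Fin k) :=
  WithLp.toLp 2 (fun i => ∑ l, M i l * v l)

/-- The divergence `∇·T`, whose `k`-th component is `Σ_ℓ X_ℓ a_{kℓ}`. -/
def divT {n m : ℕ} (H : HTypeData n m) (g : Gp n m) : EuclideanSpace ℝ (Fin (2 * n)) :=
  WithLp.toLp 2 (fun k => ∑ l, H.X l (fun h => Tmat H h.1 k l) g)

end
section AuxLemmas

variable {n m : ℕ}

private lemma euclid_sum_apply {k p : ℕ} (f : Fin p → EuclideanSpace ℝ (Fin k)) (i : Fin k) :
    (∑ j, f j) i = ∑ j, f j i := by rw [WithLp.ofLp_sum, Finset.sum_apply]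

private lemma euclid_decomp {k : ℕ} (v : EuclideanSpace ℝ (Fin k)) :
    v = ∑ i, v i • EuclideanSpace.single i 1 := by
  ext i
  rw [euclid_sum_apply]
  simp [EuclideanSpace.single_apply]

private lemma euclid_inner_eq {k : ℕ} (v w : EuclideanSpace ℝ (Fin k)) :
    ⟪v, w⟫ = ∑ i, v i * w i := by
  simp [PiLp.inner_apply, RCLike.inner_apply]
  exact Finset.sum_congr rfl fun _ _ => mul_comm _ _

private lemma euclid_abs_le {k : ℕ} (v : EuclideanSpace ℝ (Fin k)) (i : Fin k) :
    |v i| ≤ ‖v‖ := by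
  have := abs_real_inner_le_norm (EuclideanSpace.single i (1:ℝ)) v
  simpa [EuclideanSpace.inner_single_left] using this

private lemma HT.J_norm (H : HTypeData n m) (z : EuclideanSpace ℝ (Fin m))
    (x : EuclideanSpace ℝ (Fin (2 * n))) : ‖H.J z x‖ = ‖z‖ * ‖x‖ := by
  rcases eq_or_ne z 0 with rfl | hz
  · simp
  · have hz' : ‖z‖ ≠ 0 := norm_ne_zero_iff.mpr hz
    have h1 : ‖(‖z‖⁻¹ • z)‖ = 1 := by
      rw [norm_smul, norm_inv, norm_norm, inv_mul_cancel₀ hz']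
    have h2 := H.J_orth _ h1 x
    rw [_root_.map_smul, LinearMap.smul_apply, norm_smul, norm_inv, norm_norm] at h2
    field_simp at h2
    linarith [h2]

private lemma HT.bracket_self (H : HTypeData n m) (x : EuclideanSpace ℝ (Fin (2 * n))) :
    H.bracket x x = 0 := by
  have h := H.skew x x
  have h2 : (2 : ℝ) • H.bracket x x = 0 := by
    rw [two_smul]; nth_rewrite 1 [h]; rw [neg_add_cancel]
  rcases smul_eq_zero.mp h2 with h3 | h3
  · norm_num at h3
  · exact h3

private lemma HT.inner_J_self (H : HTypeData n m) (z : EuclideanSpace ℝ (Fin m))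
    (x : EuclideanSpace ℝ (Fin (2 * n))) : ⟪H.J z x, x⟫ = 0 := by
  rw [H.J_def, HT.bracket_self, inner_zero_right]

private lemma HT.inner_J_J (H : HTypeData n m) (z w : EuclideanSpace ℝ (Fin m))
    (x : EuclideanSpace ℝ (Fin (2 * n))) :
    ⟪H.J z x, H.J w x⟫ = ⟪z, w⟫ * ‖x‖ ^ 2 := by
  have hz := HT.J_norm H z x
  have hw := HT.J_norm H w x
  have hzw := HT.J_norm H (z + w) x
  have e1 : ‖H.J z x + H.J w x‖ = ‖z + w‖ * ‖x‖ := by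
    rw [← hzw]; congr 1; rw [map_add]; rfl
  have A := norm_add_sq_real (H.J z x) (H.J w x)
  have B := norm_add_sq_real z w
  rw [e1, hz, hw, mul_pow, mul_pow, mul_pow, B] at A
  nlinarith [A]

private lemma HT.inner_Jj_Jj (H : HTypeData n m) (j j' : Fin m)
    (x : EuclideanSpace ℝ (Fin (2 * n))) :
    ⟪H.J (EuclideanSpace.single j 1) x, H.J (EuclideanSpace.single j' 1) x⟫ =
      (if j = j' then 1 else 0) * ‖x‖ ^ 2 := by
  rw [HT.inner_J_J]
  congr 1
  rw [EuclideanSpace.inner_single_left]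
  simp [EuclideanSpace.single_apply]

private lemma HT.J_decomp (H : HTypeData n m) (z : EuclideanSpace ℝ (Fin m))
    (x : EuclideanSpace ℝ (Fin (2 * n))) :
    H.J z x = ∑ j, z j • H.J (EuclideanSpace.single j 1) x := by
  conv_lhs => rw [euclid_decomp z]
  rw [map_sum, LinearMap.sum_apply]
  refine Finset.sum_congr rfl fun j _ => ?_
  rw [_root_.map_smul, LinearMap.smul_apply]

end AuxLemmas
section AuxT

variable {n m : ℕ}

private lemma matApply_def {k : ℕ} (M : Matrix (Fin k) (Fin k) ℝ)
    (v : EuclideanSpace ℝ (Fin k)) (i : Fin k) : matApply M v i = ∑ l, M i l * v l := rfl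

private lemma matApply_single {k : ℕ} (M : Matrix (Fin k) (Fin k) ℝ) (l i : Fin k) :
    matApply M (EuclideanSpace.single l 1) i = M i l := by
  rw [matApply_def]
  simp [EuclideanSpace.single_apply]

private lemma matApply_mul {k : ℕ} (M N : Matrix (Fin k) (Fin k) ℝ)
    (v : EuclideanSpace ℝ (Fin k)) :
    matApply (M * N) v = matApply M (matApply N v) := by
  ext i
  simp only [matApply_def, Matrix.mul_apply, Finset.sum_mul, Finset.mul_sum]
  rw [Finset.sum_comm]
  exact Finset.sum_congr rfl fun p _ => Finset.sum_congr rfl fun l _ => by ring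

private lemma matApply_smul {k : ℕ} (M : Matrix (Fin k) (Fin k) ℝ) (c : ℝ)
    (v : EuclideanSpace ℝ (Fin k)) :
    matApply M (c • v) = c • matApply M v := by
  ext i
  simp only [matApply_def, PiLp.smul_apply, smul_eq_mul, Finset.mul_sum]
  exact Finset.sum_congr rfl fun l _ => by ring

private lemma matApply_add {k : ℕ} (M : Matrix (Fin k) (Fin k) ℝ)
    (v w : EuclideanSpace ℝ (Fin k)) :
    matApply M (v + w) = matApply M v + matApply M w := by
  ext i
  simp only [matApply_def, PiLp.add_apply, mul_add, Finset.sum_add_distrib]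

private lemma matApply_sum {k p : ℕ} (M : Matrix (Fin k) (Fin k) ℝ)
    (w : Fin p → EuclideanSpace ℝ (Fin k)) :
    matApply M (∑ j, w j) = ∑ j, matApply M (w j) := by
  ext i
  rw [euclid_sum_apply]
  simp only [matApply_def, euclid_sum_apply, Finset.mul_sum]
  rw [Finset.sum_comm]

private lemma inner_matApply {k : ℕ} (M : Matrix (Fin k) (Fin k) ℝ)
    (v w : EuclideanSpace ℝ (Fin k)) :
    ⟪matApply M v, w⟫ = ⟪v, matApply M.transpose w⟫ := by
  simp only [euclid_inner_eq, matApply_def, Matrix.transpose_apply, Finset.sum_mul,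
    Finset.mul_sum]
  rw [Finset.sum_comm]
  exact Finset.sum_congr rfl fun p _ => Finset.sum_congr rfl fun l _ => by ring

/-- The key formula for `T(x) v`. -/
private lemma Tmat_apply (H : HTypeData n m) (x v : EuclideanSpace ℝ (Fin (2 * n))) :
    matApply (Tmat H x) v = (‖x‖ ^ 2)⁻¹ •
      ∑ j, ⟪H.J (EuclideanSpace.single j 1) x, v⟫ • H.J (EuclideanSpace.single j 1) x := by
  ext i
  rw [PiLp.smul_apply, euclid_sum_apply]
  simp only [matApply_def, Tmat, euclid_inner_eq, PiLp.smul_apply, smul_eq_mul,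
    Finset.sum_mul, Finset.mul_sum]
  rw [Finset.sum_comm]
  exact Finset.sum_congr rfl fun j _ => Finset.sum_congr rfl fun l _ => by ring

private lemma Tmat_x (H : HTypeData n m) (x : EuclideanSpace ℝ (Fin (2 * n))) :
    matApply (Tmat H x) x = 0 := by
  rw [Tmat_apply]
  have : ∀ j : Fin m, ⟪H.J (EuclideanSpace.single j 1) x, x⟫ •
      H.J (EuclideanSpace.single j 1) x = 0 := fun j => by
    rw [HT.inner_J_self]; exact zero_smul _ _
  rw [Finset.sum_congr rfl fun j _ => this j]
  simp

private lemma Tmat_J (H : HTypeData n m) {x : EuclideanSpace ℝ (Fin (2 * n))} (hx : x ≠ 0)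
    (z : EuclideanSpace ℝ (Fin m)) :
    matApply (Tmat H x) (H.J z x) = H.J z x := by
  have hx2 : ‖x‖ ^ 2 ≠ 0 := pow_ne_zero 2 (norm_ne_zero_iff.mpr hx)
  rw [Tmat_apply]
  have h1 : ∀ j : Fin m, ⟪H.J (EuclideanSpace.single j 1) x, H.J z x⟫ •
      H.J (EuclideanSpace.single j 1) x =
      (‖x‖ ^ 2) • z j • H.J (EuclideanSpace.single j 1) x := fun j => by
    rw [HT.inner_J_J, EuclideanSpace.inner_single_left, smul_smul]
    congr 1
    simp [mul_comm]
  rw [Finset.sum_congr rfl fun j _ => h1 j, ← Finset.smul_sum, smul_smul,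
    inv_mul_cancel₀ hx2, one_smul, ← HT.J_decomp]

end AuxT
section AuxT2

variable {n m : ℕ}

private lemma mat_ext {k : ℕ} {M N : Matrix (Fin k) (Fin k) ℝ}
    (h : ∀ v, matApply M v = matApply N v) : M = N := by
  ext i l
  rw [← matApply_single M l i, ← matApply_single N l i, h]

private lemma Tmat_mem_span (H : HTypeData n m) (x v : EuclideanSpace ℝ (Fin (2 * n))) :
    matApply (Tmat H x) v ∈ Submodule.span ℝ
      (Set.range fun j : Fin m => H.J (EuclideanSpace.single j 1) x) := by
  rw [Tmat_apply]
  refine Submodule.smul_mem _ _ (Submodule.sum_mem _ fun j _ => Submodule.smul_mem _ _ ?_)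
  exact Submodule.subset_span ⟨j, rfl⟩

private lemma Tmat_symm (H : HTypeData n m) (x : EuclideanSpace ℝ (Fin (2 * n))) :
    (Tmat H x).transpose = Tmat H x := by
  ext i l
  simp only [Matrix.transpose_apply, Tmat]
  congr 1
  exact Finset.sum_congr rfl fun j _ => by ring

private lemma Tmat_idem (H : HTypeData n m) {x : EuclideanSpace ℝ (Fin (2 * n))}
    (hx : x ≠ 0) : Tmat H x * Tmat H x = Tmat H x := by
  refine mat_ext fun v => ?_
  rw [matApply_mul, Tmat_apply H x v, matApply_smul, matApply_sum]
  have : ∀ j : Fin m, matApply (Tmat H x)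
      (⟪H.J (EuclideanSpace.single j 1) x, v⟫ • H.J (EuclideanSpace.single j 1) x) =
      ⟪H.J (EuclideanSpace.single j 1) x, v⟫ • H.J (EuclideanSpace.single j 1) x := fun j => by
    rw [matApply_smul, Tmat_J H hx]
  rw [Finset.sum_congr rfl fun j _ => this j, ← Tmat_apply]

private lemma Tmat_norm_le (H : HTypeData n m) {x : EuclideanSpace ℝ (Fin (2 * n))}
    (hx : x ≠ 0) (v : EuclideanSpace ℝ (Fin (2 * n))) :
    ‖matApply (Tmat H x) v‖ ≤ ‖v‖ := by
  set w := matApply (Tmat H x) v with hw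
  have h1 : ⟪w, w⟫ = ⟪v, w⟫ := by
    rw [hw, inner_matApply, Tmat_symm, real_inner_comm, ← matApply_mul, Tmat_idem H hx]
    exact real_inner_comm _ _
  have h2 : ‖w‖ ^ 2 = ⟪v, w⟫ := by rw [← h1, real_inner_self_eq_norm_sq]
  have h3 : ⟪v, w⟫ ≤ ‖v‖ * ‖w‖ := real_inner_le_norm v w
  rcases eq_or_ne w 0 with h | h
  · simp [h]
  · have hw0 : 0 < ‖w‖ := norm_pos_iff.mpr h
    nlinarith [h2, h3]

private lemma Tmat_linIndep (H : HTypeData n m) {x : EuclideanSpace ℝ (Fin (2 * n))}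
    (hx : x ≠ 0) :
    LinearIndependent ℝ (fun j : Fin m => H.J (EuclideanSpace.single j 1) x) := by
  have hx0 : ‖x‖ ≠ 0 := norm_ne_zero_iff.mpr hx
  have hon : Orthonormal ℝ (fun j : Fin m => ‖x‖⁻¹ • H.J (EuclideanSpace.single j 1) x) := by
    rw [orthonormal_iff_ite]
    intro j j'
    rw [real_inner_smul_left, real_inner_smul_right, HT.inner_Jj_Jj]
    rcases eq_or_ne j j' with rfl | hne
    · simp only [if_pos rfl]
      field_simp
    · simp [hne]
  have hli := hon.linearIndependent
  exact LinearIndependent.of_comp ((‖x‖⁻¹ : ℝ) • (LinearMap.id :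
    EuclideanSpace ℝ (Fin (2 * n)) →ₗ[ℝ] EuclideanSpace ℝ (Fin (2 * n)))) hli

private lemma Tmat_finrank (H : HTypeData n m) {x : EuclideanSpace ℝ (Fin (2 * n))}
    (hx : x ≠ 0) :
    Module.finrank ℝ (Submodule.span ℝ
      (Set.range fun j : Fin m => H.J (EuclideanSpace.single j 1) x)) = m := by
  rw [finrank_span_eq_card (Tmat_linIndep H hx), Fintype.card_fin]

end AuxT2
section AuxPart3

variable {n m : ℕ}

private lemma Jjx_coord (H : HTypeData n m) (x : EuclideanSpace ℝ (Fin (2 * n)))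
    (j : Fin m) (i : Fin (2 * n)) :
    H.J (EuclideanSpace.single j 1) x i = H.bracket x (EuclideanSpace.single i 1) j := by
  have h1 : H.J (EuclideanSpace.single j 1) x i =
      ⟪H.J (EuclideanSpace.single j 1) x, EuclideanSpace.single i 1⟫ := by
    rw [EuclideanSpace.inner_single_right]; simp
  rw [h1, H.J_def, EuclideanSpace.inner_single_left]; simp

private lemma pair_decomp (b : EuclideanSpace ℝ (Fin m)) :
    (((0 : EuclideanSpace ℝ (Fin (2 * n))), b) : Gp n m) =
      ∑ j, (b j) • ((((0 : EuclideanSpace ℝ (Fin (2 * n))),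
        EuclideanSpace.single j 1)) : Gp n m) := by
  refine Prod.ext ?_ ?_
  · simp [Prod.fst_sum]
  · rw [Prod.snd_sum]
    simpa using euclid_decomp b

private lemma fderiv_zero_pair (D : (Gp n m) →L[ℝ] ℝ) (b : EuclideanSpace ℝ (Fin m)) :
    D ((0 : EuclideanSpace ℝ (Fin (2 * n))), b) =
      ∑ j, b j * D ((0 : EuclideanSpace ℝ (Fin (2 * n))), EuclideanSpace.single j 1) := by
  rw [pair_decomp b, map_sum]
  refine Finset.sum_congr rfl fun j _ => ?_
  rw [_root_.map_smul, smul_eq_mul]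

/-- `½(∇ - ∇̂)f = ½ J_{∇_z f} x`, a purely algebraic identity. -/
private lemma halfdiff (H : HTypeData n m) (f : Gp n m → ℝ)
    (x : EuclideanSpace ℝ (Fin (2 * n))) (z : EuclideanSpace ℝ (Fin m)) :
    (1/2 : ℝ) • (H.grad f (x, z) - H.gradHat f (x, z)) =
      (1/2 : ℝ) • H.J (gradZ f (x, z)) x := by
  set D := fderiv ℝ f (x, z) with hD
  ext i
  rw [PiLp.smul_apply, PiLp.smul_apply, PiLp.sub_apply, smul_eq_mul, smul_eq_mul]
  have hgrad : H.grad f (x, z) i =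
      D (EuclideanSpace.single i 1, (1/2 : ℝ) • H.bracket x (EuclideanSpace.single i 1)) := rfl
  have hgradh : H.gradHat f (x, z) i =
      D (EuclideanSpace.single i 1, (-(1/2) : ℝ) • H.bracket x (EuclideanSpace.single i 1)) := rfl
  have hsub : H.grad f (x, z) i - H.gradHat f (x, z) i =
      D ((0 : EuclideanSpace ℝ (Fin (2 * n))), H.bracket x (EuclideanSpace.single i 1)) := by
    rw [hgrad, hgradh, ← map_sub]
    congr 1
    refine Prod.ext (by simp) ?_
    show (1/2 : ℝ) • H.bracket x (EuclideanSpace.single i 1) -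
      (-(1/2) : ℝ) • H.bracket x (EuclideanSpace.single i 1) = _
    rw [← sub_smul]
    norm_num
  rw [hsub, fderiv_zero_pair]
  have hJ : H.J (gradZ f (x, z)) x i =
      ∑ j, gradZ f (x, z) j * H.J (EuclideanSpace.single j 1) x i := by
    rw [HT.J_decomp, euclid_sum_apply]
    rfl
  rw [hJ]
  congr 1
  refine Finset.sum_congr rfl fun j _ => ?_
  rw [Jjx_coord]
  show H.bracket x (EuclideanSpace.single i 1) j * gradZ f (x, z) j = _
  ring

/-- Decomposition of the horizontal gradient, coordinatewise. -/
private lemma grad_coord (H : HTypeData n m) (f : Gp n m → ℝ)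
    (x : EuclideanSpace ℝ (Fin (2 * n))) (z : EuclideanSpace ℝ (Fin m)) (i : Fin (2 * n)) :
    H.grad f (x, z) i =
      fderiv ℝ f (x, z) (EuclideanSpace.single i 1, 0) +
        (1/2 : ℝ) * H.J (gradZ f (x, z)) x i := by
  set D := fderiv ℝ f (x, z) with hD
  have hgrad : H.grad f (x, z) i =
      D (EuclideanSpace.single i 1, (1/2 : ℝ) • H.bracket x (EuclideanSpace.single i 1)) := rfl
  have hsplit : ((EuclideanSpace.single i 1 : EuclideanSpace ℝ (Fin (2 * n))),
      (1/2 : ℝ) • H.bracket x (EuclideanSpace.single i 1)) =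
      ((EuclideanSpace.single i 1 : EuclideanSpace ℝ (Fin (2 * n))),
        (0 : EuclideanSpace ℝ (Fin m))) +
      ((0 : EuclideanSpace ℝ (Fin (2 * n))),
        (1/2 : ℝ) • H.bracket x (EuclideanSpace.single i 1)) := by
    refine Prod.ext (by simp) (by simp)
  rw [hgrad, hsplit, map_add]
  congr 1
  have h2 : ((0 : EuclideanSpace ℝ (Fin (2 * n))),
      (1/2 : ℝ) • H.bracket x (EuclideanSpace.single i 1)) =
      (1/2 : ℝ) • (((0 : EuclideanSpace ℝ (Fin (2 * n))),
        H.bracket x (EuclideanSpace.single i 1)) : Gp n m) := by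
    refine Prod.ext (by simp) rfl
  rw [h2, _root_.map_smul, smul_eq_mul, fderiv_zero_pair]
  have hJ : H.J (gradZ f (x, z)) x i =
      ∑ j, gradZ f (x, z) j * H.J (EuclideanSpace.single j 1) x i := by
    rw [HT.J_decomp, euclid_sum_apply]
    rfl
  rw [hJ]
  congr 1
  refine Finset.sum_congr rfl fun j _ => ?_
  rw [Jjx_coord]
  show H.bracket x (EuclideanSpace.single i 1) j * gradZ f (x, z) j = _
  ring

/-- For a radial `C¹` function, the derivative in a horizontal direction orthogonal to `x`
vanishes. -/
private lemma radial_orth_deriv (f : Gp n m → ℝ) (hf : ContDiff ℝ 1 f)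
    (hrad : ∃ F : ℝ → ℝ → ℝ, ∀ g : Gp n m, f g = F ‖g.1‖ ‖g.2‖)
    {x : EuclideanSpace ℝ (Fin (2 * n))} (hx : x ≠ 0) (z : EuclideanSpace ℝ (Fin m))
    {u : EuclideanSpace ℝ (Fin (2 * n))} (hu : ⟪x, u⟫ = 0) :
    fderiv ℝ f (x, z) (u, 0) = 0 := by
  obtain ⟨F, hF⟩ := hrad
  rcases eq_or_ne u 0 with rfl | hu0
  · have : ((0 : EuclideanSpace ℝ (Fin (2 * n))), (0 : EuclideanSpace ℝ (Fin m))) =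
      (0 : Gp n m) := rfl
    rw [this, map_zero]
  · have hxn : (0:ℝ) < ‖x‖ := norm_pos_iff.mpr hx
    have hun : (0:ℝ) < ‖u‖ := norm_pos_iff.mpr hu0
    set u' : EuclideanSpace ℝ (Fin (2 * n)) := (‖x‖ / ‖u‖) • u with hu'
    have hu'n : ‖u'‖ = ‖x‖ := by
      rw [hu', norm_smul, Real.norm_eq_abs, abs_div, abs_of_nonneg (norm_nonneg x),
        abs_of_nonneg (norm_nonneg u), div_mul_cancel₀ _ (ne_of_gt hun)]
    have hxu' : ⟪x, u'⟫ = 0 := by rw [hu', real_inner_smul_right, hu, mul_zero]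
    set γ : ℝ → EuclideanSpace ℝ (Fin (2 * n)) :=
      fun t => Real.cos t • x + Real.sin t • u' with hγ
    have hγ0 : γ 0 = x := by simp [hγ]
    have hnorm : ∀ t, ‖γ t‖ = ‖x‖ := by
      intro t
      have h1 : ‖γ t‖ ^ 2 = ‖x‖ ^ 2 := by
        rw [hγ]
        rw [norm_add_sq_real, norm_smul, norm_smul, real_inner_smul_left,
          real_inner_smul_right, hxu', Real.norm_eq_abs, Real.norm_eq_abs, hu'n]
        rw [mul_pow, mul_pow, sq_abs, sq_abs]
        nlinarith [Real.sin_sq_add_cos_sq t]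
      have h2 : ‖γ t‖ = Real.sqrt (‖γ t‖ ^ 2) := (Real.sqrt_sq (norm_nonneg _)).symm
      rw [h2, h1, Real.sqrt_sq (norm_nonneg _)]
    have hconst : (fun t => f (γ t, z)) = fun _ => f (x, z) := by
      funext t
      rw [hF, hF]
      simp only [hnorm t]
    have hγd : HasDerivAt γ u' 0 := by
      have h1 : HasDerivAt (fun t => Real.cos t • x) ((-Real.sin 0) • x) 0 :=
        (Real.hasDerivAt_cos 0).smul_const x
      have h2 : HasDerivAt (fun t => Real.sin t • u') ((Real.cos 0) • u') 0 :=
        (Real.hasDerivAt_sin 0).smul_const u'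
      have := h1.add h2
      simp only [Real.sin_zero, neg_zero, zero_smul, Real.cos_zero, one_smul, zero_add] at this
      exact this
    have hp : HasDerivAt (fun t => ((γ t, z) : Gp n m)) ((u', (0 : EuclideanSpace ℝ (Fin m)))) 0 :=
      hγd.prodMk (hasDerivAt_const 0 z)
    have hfd : HasFDerivAt f (fderiv ℝ f (x, z)) (γ 0, z) := by
      rw [hγ0]
      exact (hf.differentiable one_ne_zero (x, z)).hasFDerivAt
    have hcomp : HasDerivAt (fun t => f (γ t, z)) (fderiv ℝ f (x, z) (u', 0)) 0 :=
      hfd.comp_hasDerivAt 0 hp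
    rw [hconst] at hcomp
    have hz : fderiv ℝ f (x, z) (u', 0) = 0 := by
      have := (hasDerivAt_const (0:ℝ) (f (x, z))).unique hcomp
      linarith [this]
    have hdecomp : ((u, (0 : EuclideanSpace ℝ (Fin m))) : Gp n m) =
        (‖u‖ / ‖x‖) • ((u', (0 : EuclideanSpace ℝ (Fin m))) : Gp n m) := by
      refine Prod.ext ?_ (by simp)
      show u = (‖u‖ / ‖x‖) • u'
      rw [hu', smul_smul]
      rw [div_mul_div_comm, mul_comm ‖u‖ ‖x‖, div_self (by positivity), one_smul]
    rw [hdecomp, _root_.map_smul, hz, smul_zero]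

end AuxPart3
section AuxPart3b

variable {n m : ℕ}

private lemma part3core (H : HTypeData n m) {x : EuclideanSpace ℝ (Fin (2 * n))}
    (hx : x ≠ 0) (f : Gp n m → ℝ) (hf : ContDiff ℝ 1 f)
    (hrad : ∃ F : ℝ → ℝ → ℝ, ∀ g : Gp n m, f g = F ‖g.1‖ ‖g.2‖)
    (z : EuclideanSpace ℝ (Fin m)) :
    matApply (Tmat H x) (H.grad f (x, z)) = (1/2 : ℝ) • H.J (gradZ f (x, z)) x := by
  set D := fderiv ℝ f (x, z) with hD
  set v0 : EuclideanSpace ℝ (Fin (2 * n)) :=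
    WithLp.toLp 2 (fun i => D (EuclideanSpace.single i 1, 0)) with hv0
  have hx2 : ‖x‖ ^ 2 ≠ 0 := pow_ne_zero 2 (norm_ne_zero_iff.mpr hx)
  have hinner : ∀ u : EuclideanSpace ℝ (Fin (2 * n)), ⟪v0, u⟫ = D (u, 0) := by
    intro u
    rw [euclid_inner_eq]
    have hu : ((u, (0 : EuclideanSpace ℝ (Fin m))) : Gp n m) =
        ∑ i, u i • (((EuclideanSpace.single i 1 : EuclideanSpace ℝ (Fin (2 * n))),
          (0 : EuclideanSpace ℝ (Fin m))) : Gp n m) := by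
      refine Prod.ext ?_ ?_
      · rw [Prod.fst_sum]; simpa using euclid_decomp u
      · rw [Prod.snd_sum]; simp
    rw [hu, map_sum]
    refine Finset.sum_congr rfl fun i _ => ?_
    rw [_root_.map_smul, smul_eq_mul]
    simp only [hv0, PiLp.toLp_apply]
    ring
  have hc : v0 = (D (x, 0) / ‖x‖ ^ 2) • x := by
    set c := D (x, 0) / ‖x‖ ^ 2 with hcdef
    have hxu : ⟪x, v0 - c • x⟫ = 0 := by
      rw [inner_sub_right, real_inner_smul_right, real_inner_self_eq_norm_sq]
      have hxv : ⟪x, v0⟫ = D (x, 0) := by rw [real_inner_comm]; exact hinner x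
      rw [hxv, hcdef]
      field_simp
      ring
    have hDu : D (v0 - c • x, 0) = 0 := radial_orth_deriv f hf hrad hx z hxu
    have h1 : ⟪v0, v0 - c • x⟫ = 0 := by rw [hinner]; exact hDu
    have h2 : ⟪c • x, v0 - c • x⟫ = 0 := by
      rw [real_inner_smul_left, hxu, mul_zero]
    have h3 : ⟪v0 - c • x, v0 - c • x⟫ = (0:ℝ) := by
      rw [inner_sub_left, h1, h2, sub_zero]
    have h4 : v0 - c • x = 0 := by
      have h5 : ‖v0 - c • x‖ ^ 2 = (0:ℝ) := by
        rw [← real_inner_self_eq_norm_sq, h3]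
      have h6 : ‖v0 - c • x‖ = 0 := by
        nlinarith [norm_nonneg (v0 - c • x)]
      exact norm_eq_zero.mp h6
    exact (sub_eq_zero.mp h4)
  have hgd : H.grad f (x, z) = v0 + (1/2 : ℝ) • H.J (gradZ f (x, z)) x := by
    ext i
    rw [PiLp.add_apply, PiLp.smul_apply, smul_eq_mul]
    exact grad_coord H f x z i
  rw [hgd, matApply_add, hc, matApply_smul, Tmat_x, smul_zero, zero_add,
    matApply_smul, Tmat_J H hx]

end AuxPart3b
section AuxPart2

variable {n m : ℕ}

private lemma Xl_Tmat_bound (H : HTypeData n m) {x : EuclideanSpace ℝ (Fin (2 * n))}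
    (hx : x ≠ 0) (z : EuclideanSpace ℝ (Fin m)) (k l : Fin (2 * n)) :
    |H.X l (fun h => Tmat H h.1 k l) (x, z)| ≤ 4 * m / ‖x‖ := by
  classical
  set r : ℝ := ‖x‖ with hr
  have hr0 : 0 < r := norm_pos_iff.mpr hx
  have hx2 : ‖x‖ ^ 2 ≠ 0 := pow_ne_zero 2 (ne_of_gt hr0)
  set C1 : Fin m → (EuclideanSpace ℝ (Fin (2 * n)) →L[ℝ] ℝ) := fun j =>
    (EuclideanSpace.proj k).comp
      (LinearMap.toContinuousLinearMap (H.J (EuclideanSpace.single j 1))) with hC1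
  set C2 : Fin m → (EuclideanSpace ℝ (Fin (2 * n)) →L[ℝ] ℝ) := fun j =>
    (EuclideanSpace.proj l).comp
      (LinearMap.toContinuousLinearMap (H.J (EuclideanSpace.single j 1))) with hC2
  have hC1a : ∀ j y, C1 j y = H.J (EuclideanSpace.single j 1) y k := fun j y => rfl
  have hC2a : ∀ j y, C2 j y = H.J (EuclideanSpace.single j 1) y l := fun j y => rfl
  -- derivative of the inverse square norm
  have hq : HasFDerivAt (fun y : EuclideanSpace ℝ (Fin (2 * n))  => ‖y‖ ^ 2)
      (2 • (innerSL ℝ x)) x := (hasStrictFDerivAt_norm_sq x).hasFDerivAt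
  have hinv : HasFDerivAt (fun y : EuclideanSpace ℝ (Fin (2 * n)) => (‖y‖ ^ 2)⁻¹)
      ((-((‖x‖ ^ 2) ^ 2)⁻¹) • (2 • (innerSL ℝ x))) x := by
    have h1 := (hasDerivAt_inv hx2).comp_hasFDerivAt x hq
    exact h1
  have hS : HasFDerivAt (fun y => ∑ j : Fin m, C1 j y * C2 j y)
      (∑ j : Fin m, (C1 j x • C2 j + C2 j x • C1 j)) x :=
    HasFDerivAt.fun_sum fun j _ => ((C1 j).hasFDerivAt.mul (C2 j).hasFDerivAt)
  set Dphi : EuclideanSpace ℝ (Fin (2 * n)) →L[ℝ] ℝ :=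
    (‖x‖ ^ 2)⁻¹ • (∑ j : Fin m, (C1 j x • C2 j + C2 j x • C1 j)) +
      (∑ j : Fin m, C1 j x * C2 j x) • ((-((‖x‖ ^ 2) ^ 2)⁻¹) • (2 • (innerSL ℝ x))) with hDphi
  have hT : HasFDerivAt (fun y => Tmat H y k l) Dphi x := by
    have h2 := hinv.mul hS
    exact h2
  have hcomp : HasFDerivAt (fun h : Gp n m => Tmat H h.1 k l)
      (Dphi.comp (ContinuousLinearMap.fst ℝ (EuclideanSpace ℝ (Fin (2 * n)))
        (EuclideanSpace ℝ (Fin m)))) (x, z) := by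
      have h := hT.comp (x, z) (hasFDerivAt_fst (𝕜 := ℝ) (E := EuclideanSpace ℝ (Fin (2 * n)))
        (F := EuclideanSpace ℝ (Fin m)) (p := (x, z)))
      exact h
  have hX : H.X l (fun h => Tmat H h.1 k l) (x, z) = Dphi (EuclideanSpace.single l 1) := by
    show fderiv ℝ (fun h : Gp n m => Tmat H h.1 k l) (x, z) _ = _
    rw [hcomp.fderiv]
    rfl
  rw [hX]
  -- now estimate
  set el : EuclideanSpace ℝ (Fin (2 * n)) := EuclideanSpace.single l 1 with hel
  have hel1 : ‖el‖ = 1 := by rw [hel, EuclideanSpace.norm_single]; norm_num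
  have hJy : ∀ (j : Fin m) (y : EuclideanSpace ℝ (Fin (2 * n))) (i : Fin (2 * n)),
      |H.J (EuclideanSpace.single j 1) y i| ≤ ‖y‖ := by
    intro j y i
    have h1 := euclid_abs_le (H.J (EuclideanSpace.single j 1) y) i
    have h2 : ‖H.J (EuclideanSpace.single j 1) y‖ = ‖y‖ := by
      rw [HT.J_norm, EuclideanSpace.norm_single]; norm_num
    rw [h2] at h1
    exact h1
  have hval : Dphi el = (‖x‖ ^ 2)⁻¹ * (∑ j : Fin m, (C1 j x * C2 j el + C2 j x * C1 j el)) +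
      (∑ j : Fin m, C1 j x * C2 j x) * ((-((‖x‖ ^ 2) ^ 2)⁻¹) * (2 * ⟪x, el⟫)) := by
    rw [hDphi]
    simp only [ContinuousLinearMap.add_apply, ContinuousLinearMap.smul_apply,
      ContinuousLinearMap.coe_sum', Finset.sum_apply, ContinuousLinearMap.coe_smul',
      Pi.smul_apply, smul_eq_mul, innerSL_apply_apply]
    ring
  have hsum1 : |∑ j : Fin m, (C1 j x * C2 j el + C2 j x * C1 j el)| ≤ m * (2 * r) := by
    calc |∑ j : Fin m, (C1 j x * C2 j el + C2 j x * C1 j el)|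
        ≤ ∑ j : Fin m, |C1 j x * C2 j el + C2 j x * C1 j el| :=
          Finset.abs_sum_le_sum_abs _ _
      _ ≤ ∑ _j : Fin m, (2 * r) := by
          refine Finset.sum_le_sum fun j _ => ?_
          have e1 : |C1 j x| ≤ r := by rw [hC1a]; exact hJy j x k
          have e2 : |C2 j x| ≤ r := by rw [hC2a]; exact hJy j x l
          have e3 : |C1 j el| ≤ 1 := by rw [hC1a]; simpa [hel1] using hJy j el k
          have e4 : |C2 j el| ≤ 1 := by rw [hC2a]; simpa [hel1] using hJy j el l
          calc |C1 j x * C2 j el + C2 j x * C1 j el|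
              ≤ |C1 j x| * |C2 j el| + |C2 j x| * |C1 j el| := by
                refine (abs_add_le _ _).trans ?_
                rw [abs_mul, abs_mul]
            _ ≤ r * 1 + r * 1 :=
                add_le_add (mul_le_mul e1 e4 (abs_nonneg _) (le_of_lt hr0))
                  (mul_le_mul e2 e3 (abs_nonneg _) (le_of_lt hr0))
            _ = 2 * r := by ring
      _ = m * (2 * r) := by
          rw [Finset.sum_const, Finset.card_univ, Fintype.card_fin, nsmul_eq_mul]
  have hsum2 : |∑ j : Fin m, C1 j x * C2 j x| ≤ m * r ^ 2 := by
    calc |∑ j : Fin m, C1 j x * C2 j x| ≤ ∑ j : Fin m, |C1 j x * C2 j x| :=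
          Finset.abs_sum_le_sum_abs _ _
      _ ≤ ∑ _j : Fin m, r ^ 2 := by
          refine Finset.sum_le_sum fun j _ => ?_
          rw [abs_mul, sq]
          have e1 : |C1 j x| ≤ r := by rw [hC1a]; exact hJy j x k
          have e2 : |C2 j x| ≤ r := by rw [hC2a]; exact hJy j x l
          exact mul_le_mul e1 e2 (abs_nonneg _) (le_of_lt hr0)
      _ = m * r ^ 2 := by
          rw [Finset.sum_const, Finset.card_univ, Fintype.card_fin, nsmul_eq_mul]
  have hip : |⟪x, el⟫| ≤ r := by
    have := abs_real_inner_le_norm x el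
    rwa [hel1, mul_one] at this
  have hfinal : |Dphi el| ≤ (r ^ 2)⁻¹ * (m * (2 * r)) + (m * r ^ 2) * (((r ^ 2) ^ 2)⁻¹ * (2 * r)) := by
    rw [hval]
    refine (abs_add_le _ _).trans ?_
    have hA : |(‖x‖ ^ 2)⁻¹ * (∑ j : Fin m, (C1 j x * C2 j el + C2 j x * C1 j el))| ≤
        (r ^ 2)⁻¹ * (m * (2 * r)) := by
      rw [abs_mul, abs_inv, abs_of_nonneg (by positivity : (0:ℝ) ≤ ‖x‖ ^ 2)]
      exact mul_le_mul le_rfl hsum1 (abs_nonneg _) (by positivity)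
    have hB : |(∑ j : Fin m, C1 j x * C2 j x) * ((-((‖x‖ ^ 2) ^ 2)⁻¹) * (2 * ⟪x, el⟫))| ≤
        (m * r ^ 2) * (((r ^ 2) ^ 2)⁻¹ * (2 * r)) := by
      rw [abs_mul, abs_mul, abs_neg, abs_inv, abs_of_nonneg (by positivity : (0:ℝ) ≤ (‖x‖^2)^2),
        abs_mul]
      have h2 : |(2:ℝ)| * |⟪x, el⟫| ≤ 2 * r := by
        rw [abs_two]
        exact mul_le_mul le_rfl hip (abs_nonneg _) (by norm_num)
      refine mul_le_mul hsum2 ?_ (by positivity) (by positivity)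
      exact mul_le_mul le_rfl h2 (by positivity) (by positivity)
    exact add_le_add hA hB
  refine hfinal.trans (le_of_eq ?_)
  field_simp
  ring

private lemma divT_bound (H : HTypeData n m) (hn : 1 ≤ n)
    {x : EuclideanSpace ℝ (Fin (2 * n))} (hx : x ≠ 0) (z : EuclideanSpace ℝ (Fin m)) :
    ‖divT H (x, z)‖ ≤ 3 * (m : ℝ) * (2 * (n : ℝ)) ^ 2 / ‖x‖ := by
  set r : ℝ := ‖x‖ with hr
  have hr0 : 0 < r := norm_pos_iff.mpr hx
  have hcoord : ∀ k : Fin (2 * n), |divT H (x, z) k| ≤ 8 * n * m / r := by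
    intro k
    calc |divT H (x, z) k| = |∑ l, H.X l (fun h => Tmat H h.1 k l) (x, z)| := rfl
      _ ≤ ∑ l : Fin (2 * n), |H.X l (fun h => Tmat H h.1 k l) (x, z)| :=
          Finset.abs_sum_le_sum_abs _ _
      _ ≤ ∑ _l : Fin (2 * n), (4 * m / r) :=
          Finset.sum_le_sum fun l _ => Xl_Tmat_bound H hx z k l
      _ = (2 * n : ℕ) * (4 * m / r) := by
          rw [Finset.sum_const, Finset.card_univ, Fintype.card_fin, nsmul_eq_mul]
      _ = 8 * n * m / r := by push_cast; ring
  have hC : (0:ℝ) ≤ 3 * (m : ℝ) * (2 * (n : ℝ)) ^ 2 / r := by positivity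
  have hsum : ∑ k : Fin (2 * n), ‖divT H (x, z) k‖ ^ 2 ≤
      (2 * n : ℕ) * (8 * n * m / r) ^ 2 := by
    calc ∑ k : Fin (2 * n), ‖divT H (x, z) k‖ ^ 2
        ≤ ∑ _k : Fin (2 * n), (8 * n * m / r) ^ 2 := by
          refine Finset.sum_le_sum fun k _ => ?_
          rw [Real.norm_eq_abs]
          have := hcoord k
          have h0 : (0:ℝ) ≤ |divT H (x, z) k| := abs_nonneg _
          nlinarith
      _ = (2 * n : ℕ) * (8 * n * m / r) ^ 2 := by
          rw [Finset.sum_const, Finset.card_univ, Fintype.card_fin, nsmul_eq_mul]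
  have h2 : ((2 * n : ℕ) : ℝ) * (8 * n * m / r) ^ 2 ≤ (3 * (m : ℝ) * (2 * (n : ℝ)) ^ 2 / r) ^ 2 := by
    have hn1 : (1:ℝ) ≤ (n : ℝ) := by exact_mod_cast hn
    have hr2 : (0:ℝ) < r ^ 2 := by positivity
    rw [div_pow, div_pow]
    rw [show ((2 * n : ℕ) : ℝ) * ((8 * (n:ℝ) * (m:ℝ)) ^ 2 / r ^ 2) =
      (((2 * n : ℕ) : ℝ) * (8 * (n:ℝ) * (m:ℝ)) ^ 2) / r ^ 2 from by ring]
    rw [div_le_div_iff_of_pos_right hr2]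
    have k1 : (0:ℝ) ≤ (n:ℝ) ^ 3 * (m:ℝ) ^ 2 := by positivity
    push_cast
    nlinarith [k1, hn1, mul_le_mul_of_nonneg_left hn1 k1]
  calc ‖divT H (x, z)‖ = Real.sqrt (∑ k, ‖divT H (x, z) k‖ ^ 2) := EuclideanSpace.norm_eq _
    _ ≤ Real.sqrt ((3 * (m : ℝ) * (2 * (n : ℝ)) ^ 2 / r) ^ 2) :=
        Real.sqrt_le_sqrt (hsum.trans h2)
    _ = 3 * (m : ℝ) * (2 * (n : ℝ)) ^ 2 / r := Real.sqrt_sq hC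

end AuxPart2

/-- Properties of `T(x)`: (i) it is the orthogonal projection onto the `m`-dimensional
subspace spanned by the mutually orthogonal vectors `J_{u_j} x`, annihilates `x`, fixes
each `J_z x`, and has operator norm `1`; (ii) `|∇·T(x)| ≤ 3m(2n)²/|x|`; (iii) for radial
`C¹` functions `f`, `T(x) ∇f(x,z) = ½(∇-∇̂)f(x,z) = ½ J_{∇_z f(x,z)} x`. -/
theorem Tmat_properties (n m : ℕ) (hn : 1 ≤ n) (hm : 1 ≤ m) (H : HTypeData n m)
    (x : EuclideanSpace ℝ (Fin (2 * n))) (hx : x ≠ 0) :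
    ((∀ j j' : Fin m, j ≠ j' →
        ⟪H.J (EuclideanSpace.single j 1) x, H.J (EuclideanSpace.single j' 1) x⟫ = 0) ∧
      Module.finrank ℝ
        (Submodule.span ℝ
          (Set.range fun j : Fin m => H.J (EuclideanSpace.single j 1) x)) = m ∧
      matApply (Tmat H x) x = 0 ∧
      (∀ z : EuclideanSpace ℝ (Fin m), matApply (Tmat H x) (H.J z x) = H.J z x) ∧
      (∀ v : EuclideanSpace ℝ (Fin (2 * n)), matApply (Tmat H x) v ∈
        Submodule.span ℝ
          (Set.range fun j : Fin m => H.J (EuclideanSpace.single j 1) x)) ∧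
      (Tmat H x).transpose = Tmat H x ∧ Tmat H x * Tmat H x = Tmat H x ∧
      (∀ v : EuclideanSpace ℝ (Fin (2 * n)), ‖matApply (Tmat H x) v‖ ≤ ‖v‖) ∧
      (∃ v : EuclideanSpace ℝ (Fin (2 * n)), v ≠ 0 ∧ ‖matApply (Tmat H x) v‖ = ‖v‖)) ∧
    (∀ z : EuclideanSpace ℝ (Fin m),
      ‖divT H (x, z)‖ ≤ 3 * (m : ℝ) * (2 * (n : ℝ)) ^ 2 / ‖x‖) ∧
    (∀ f : Gp n m → ℝ, ContDiff ℝ 1 f →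
      (∃ F : ℝ → ℝ → ℝ, ∀ g : Gp n m, f g = F ‖g.1‖ ‖g.2‖) →
      ∀ z : EuclideanSpace ℝ (Fin m), z ≠ 0 →
        matApply (Tmat H x) (H.grad f (x, z)) =
          (1 / 2 : ℝ) • (H.grad f (x, z) - H.gradHat f (x, z)) ∧
        matApply (Tmat H x) (H.grad f (x, z)) =
          (1 / 2 : ℝ) • H.J (gradZ f (x, z)) x) := by
  refine ⟨⟨?_, Tmat_finrank H hx, Tmat_x H x, fun z => Tmat_J H hx z,
      fun v => Tmat_mem_span H x v, Tmat_symm H x, Tmat_idem H hx,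
      fun v => Tmat_norm_le H hx v, ?_⟩, fun z => divT_bound H hn hx z, ?_⟩
  · intro j j' hjj
    rw [HT.inner_Jj_Jj]
    simp [hjj]
  · refine ⟨H.J (EuclideanSpace.single (⟨0, hm⟩ : Fin m) 1) x, ?_, ?_⟩
    · intro h
      have h1 := HT.J_norm H (EuclideanSpace.single (⟨0, hm⟩ : Fin m) 1) x
      rw [h, norm_zero, EuclideanSpace.norm_single] at h1
      have h2 : ‖x‖ ≠ 0 := norm_ne_zero_iff.mpr hx
      simp at h1
      exact h2 h1.symm
    · rw [Tmat_J H hx]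
  · intro f hf hrad z _
    have hcore := part3core H hx f hf hrad z
    refine ⟨?_, ?_⟩
    · rw [hcore, ← halfdiff H f x z]
    · exact hcore
end
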